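/- If g and h are continuous on [0,1] and ∫₀¹ g(x) dx = ∫₀¹ h(x) dx, then max_{x∈[0,1]} |S(g)(x) − S(h)(x)| ≤ (1/2)·max_{x∈[0,1]} |g(x) − h(x)|; that is, S is a contraction with constant 1/2 on the set of continuous functions on [0,1] with a fixed integral, under the maximum norm. -/
import Mathlib


open MeasureTheory

/-- The piecewise transformation `T(f)` from the paper: `T(f)(x) = 2 f(2x)` on `[0,1/2]`
and `T(f)(x) = 2 f(2-2x)` on `(1/2,1]`. -/
noncomputable def T (f : ℝ → ℝ) (x : ℝ) : ℝ :=
  if x ≤ 1 / 2 then 2 * f (2 * x) else 2 * f (2 - 2 * x)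

/-- The integral operator `S(f)(x) = ∫₀ˣ T(f)(t) dt`. -/
noncomputable def S (f : ℝ → ℝ) (x : ℝ) : ℝ := ∫ t in (0:ℝ)..x, T f t

lemma S_eq_left (φ : ℝ → ℝ) {x : ℝ} (hx0 : 0 ≤ x) (hx : x ≤ 1/2) :
    S φ x = ∫ u in (0:ℝ)..(2*x), φ u := by
  have h1 : S φ x = ∫ t in (0:ℝ)..x, 2 * φ (2*t) := by
    apply intervalIntegral.integral_congr
    intro t ht
    rw [Set.uIcc_of_le hx0] at ht
    simp only [T, if_pos (ht.2.trans hx)]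
  rw [h1, intervalIntegral.integral_const_mul,
    intervalIntegral.integral_comp_mul_left φ two_ne_zero]
  norm_num
  ring

lemma T_eqOn_right (φ : ℝ → ℝ) : Set.EqOn (T φ) (fun t => 2 * φ (2 - 2*t))
    (Set.Icc (1/2 : ℝ) 1) := by
  intro t ht
  simp only [T]
  split_ifs with hle
  · have : t = 1/2 := le_antisymm hle ht.1
    subst this; norm_num
  · rfl

lemma S_eq_right (φ : ℝ → ℝ) (hφ : ContinuousOn φ (Set.Icc 0 1)) {x : ℝ}
    (hx : 1/2 ≤ x) (hx1 : x ≤ 1) :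
    S φ x = (∫ u in (0:ℝ)..1, φ u) + ∫ u in (2-2*x)..1, φ u := by
  have contT1 : ContinuousOn (T φ) (Set.Icc (0:ℝ) (1/2)) := by
    apply ContinuousOn.congr (f := fun t => 2 * φ (2*t))
    · exact continuousOn_const.mul (hφ.comp (continuous_mul_left 2).continuousOn
        (fun t (ht : t ∈ Set.Icc (0:ℝ) (1/2)) =>
          ⟨by linarith [ht.1], by linarith [ht.2]⟩))
    · intro t ht
      simp only [T, if_pos ht.2]
  have contT2 : ContinuousOn (T φ) (Set.Icc (1/2:ℝ) 1) := by
    apply ContinuousOn.congr (f := fun t => 2 * φ (2 - 2*t))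
    · exact continuousOn_const.mul
        (hφ.comp (by fun_prop : Continuous fun t : ℝ => 2 - 2*t).continuousOn
        (fun t (ht : t ∈ Set.Icc (1/2:ℝ) 1) =>
          ⟨by linarith [ht.2], by linarith [ht.1]⟩))
    · exact T_eqOn_right φ
  have i1 : IntervalIntegrable (T φ) volume 0 (1/2) := by
    apply ContinuousOn.intervalIntegrable
    rwa [Set.uIcc_of_le (by norm_num)]
  have i2 : IntervalIntegrable (T φ) volume (1/2) x := by
    apply ContinuousOn.intervalIntegrable
    rw [Set.uIcc_of_le hx]
    exact contT2.mono (Set.Icc_subset_Icc le_rfl hx1)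
  have hsplit : S φ x = (∫ t in (0:ℝ)..(1/2), T φ t) + ∫ t in (1/2:ℝ)..x, T φ t :=
    (intervalIntegral.integral_add_adjacent_intervals i1 i2).symm
  have e1 : (∫ t in (0:ℝ)..(1/2), T φ t) = ∫ u in (0:ℝ)..1, φ u := by
    have : (∫ t in (0:ℝ)..(1/2), T φ t) = ∫ t in (0:ℝ)..(1/2), 2 * φ (2*t) := by
      apply intervalIntegral.integral_congr
      intro t ht
      rw [Set.uIcc_of_le (by norm_num : (0:ℝ) ≤ 1/2)] at ht
      simp only [T, if_pos ht.2]
    rw [this, intervalIntegral.integral_const_mul,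
      intervalIntegral.integral_comp_mul_left φ two_ne_zero]
    norm_num
    ring
  have e2 : (∫ t in (1/2:ℝ)..x, T φ t) = ∫ u in (2-2*x)..1, φ u := by
    have : (∫ t in (1/2:ℝ)..x, T φ t) = ∫ t in (1/2:ℝ)..x, 2 * φ (2 - 2*t) := by
      apply intervalIntegral.integral_congr
      intro t ht
      rw [Set.uIcc_of_le hx] at ht
      exact T_eqOn_right φ ⟨ht.1, ht.2.trans hx1⟩
    rw [this, intervalIntegral.integral_const_mul,
      intervalIntegral.integral_comp_sub_mul φ two_ne_zero 2]
    norm_num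
    ring
  rw [hsplit, e1, e2]

/-- `S` is a contraction with constant `1/2` in the max norm on continuous functions
on `[0,1]` with a fixed integral. -/
theorem S_contraction (g h : ℝ → ℝ)
    (hg : ContinuousOn g (Set.Icc 0 1)) (hh : ContinuousOn h (Set.Icc 0 1))
    (hint : (∫ x in (0:ℝ)..1, g x) = ∫ x in (0:ℝ)..1, h x) :
    sSup ((fun x => |S g x - S h x|) '' Set.Icc 0 1) ≤
      1 / 2 * sSup ((fun x => |g x - h x|) '' Set.Icc 0 1) := by
  set f : ℝ → ℝ := fun x => g x - h x with hfdef
  have hfc : ContinuousOn f (Set.Icc 0 1) := hg.sub hh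
  set M := sSup ((fun x => |g x - h x|) '' Set.Icc 0 1) with hMdef
  have hbdd : BddAbove ((fun x => |g x - h x|) '' Set.Icc 0 1) :=
    (isCompact_Icc.image_of_continuousOn hfc.abs).bddAbove
  have hle : ∀ x ∈ Set.Icc (0:ℝ) 1, |f x| ≤ M := fun x hx => le_csSup hbdd ⟨x, hx, rfl⟩
  have hM0 : 0 ≤ M := le_trans (abs_nonneg _) (hle 0 ⟨le_refl 0, zero_le_one⟩)
  have hfint : ∀ a b : ℝ, a ∈ Set.Icc (0:ℝ) 1 → b ∈ Set.Icc (0:ℝ) 1 →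
      IntervalIntegrable f volume a b := fun a b ha hb =>
    (hfc.mono (Set.uIcc_subset_Icc ha hb)).intervalIntegrable
  have hgint : ∀ a b : ℝ, a ∈ Set.Icc (0:ℝ) 1 → b ∈ Set.Icc (0:ℝ) 1 →
      IntervalIntegrable g volume a b := fun a b ha hb =>
    (hg.mono (Set.uIcc_subset_Icc ha hb)).intervalIntegrable
  have hhint : ∀ a b : ℝ, a ∈ Set.Icc (0:ℝ) 1 → b ∈ Set.Icc (0:ℝ) 1 →
      IntervalIntegrable h volume a b := fun a b ha hb =>
    (hh.mono (Set.uIcc_subset_Icc ha hb)).intervalIntegrable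
  have h01 : (0:ℝ) ∈ Set.Icc (0:ℝ) 1 := ⟨le_refl 0, zero_le_one⟩
  have h11 : (1:ℝ) ∈ Set.Icc (0:ℝ) 1 := ⟨zero_le_one, le_refl 1⟩
  have hint0 : (∫ x in (0:ℝ)..1, f x) = 0 := by
    rw [hfdef]
    rw [intervalIntegral.integral_sub (hgint 0 1 h01 h11) (hhint 0 1 h01 h11), hint,
      sub_self]
  have key : ∀ y ∈ Set.Icc (0:ℝ) 1, |∫ x in (0:ℝ)..y, f x| ≤ M / 2 := by
    intro y hy
    by_cases hy2 : y ≤ 1/2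
    · have hb := intervalIntegral.norm_integral_le_of_norm_le_const (C := M)
        (f := f) (a := 0) (b := y) (fun t ht => by
          rw [Set.uIoc_of_le hy.1] at ht
          exact hle t ⟨le_of_lt ht.1, ht.2.trans hy.2⟩)
      rw [Real.norm_eq_abs] at hb
      calc |∫ x in (0:ℝ)..y, f x| ≤ M * |y - 0| := hb
        _ ≤ M / 2 := by
            rw [sub_zero, abs_of_nonneg hy.1]
            nlinarith
    · push_neg at hy2
      have heq : (∫ x in (0:ℝ)..y, f x) = - ∫ x in y..1, f x := by
        have := intervalIntegral.integral_add_adjacent_intervals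
          (hfint 0 y h01 hy) (hfint y 1 hy h11)
        rw [hint0] at this
        linarith
      rw [heq, abs_neg]
      have hb := intervalIntegral.norm_integral_le_of_norm_le_const (C := M)
        (f := f) (a := y) (b := 1) (fun t ht => by
          rw [Set.uIoc_of_le hy.2] at ht
          exact hle t ⟨hy.1.trans (le_of_lt ht.1), ht.2⟩)
      rw [Real.norm_eq_abs] at hb
      calc |∫ x in y..(1:ℝ), f x| ≤ M * |1 - y| := hb
        _ ≤ M / 2 := by
            rw [abs_of_nonneg (by linarith [hy.2])]
            nlinarith [hy.2]
  have main : ∀ x ∈ Set.Icc (0:ℝ) 1, |S g x - S h x| ≤ M / 2 := by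
    intro x hx
    by_cases hx2 : x ≤ 1/2
    · have h2x : 2*x ∈ Set.Icc (0:ℝ) 1 := ⟨by linarith [hx.1], by linarith⟩
      rw [S_eq_left g hx.1 hx2, S_eq_left h hx.1 hx2,
        ← intervalIntegral.integral_sub (hgint 0 (2*x) h01 h2x) (hhint 0 (2*x) h01 h2x)]
      exact key (2*x) h2x
    · push_neg at hx2
      have hy : 2 - 2*x ∈ Set.Icc (0:ℝ) 1 := ⟨by linarith [hx.2], by linarith⟩
      rw [S_eq_right g hg (le_of_lt hx2) hx.2, S_eq_right h hh (le_of_lt hx2) hx.2]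
      have e2 : (∫ u in (2-2*x)..1, f u) =
          (∫ u in (2-2*x)..1, g u) - ∫ u in (2-2*x)..1, h u :=
        intervalIntegral.integral_sub (hgint (2-2*x) 1 hy h11) (hhint (2-2*x) 1 hy h11)
      have e : ((∫ u in (0:ℝ)..1, g u) + ∫ u in (2-2*x)..1, g u) -
          ((∫ u in (0:ℝ)..1, h u) + ∫ u in (2-2*x)..1, h u) =
          ∫ u in (2-2*x)..1, f u := by
        rw [e2, hint]
        ring
      rw [e]
      have heq : (∫ u in (2-2*x)..1, f u) = - ∫ u in (0:ℝ)..(2-2*x), f u := by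
        have := intervalIntegral.integral_add_adjacent_intervals
          (hfint 0 (2-2*x) h01 hy) (hfint (2-2*x) 1 hy h11)
        rw [hint0] at this
        linarith
      rw [heq, abs_neg]
      exact key (2-2*x) hy
  apply Real.sSup_le
  · rintro y ⟨x, hx, rfl⟩
    calc |S g x - S h x| ≤ M / 2 := main x hx
      _ = 1/2 * M := by ring
  · positivity
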